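/- The matrix E' := I - P_Z^perp (I - E_WZ) is symmetric and idempotent, and satisfies E' W = W and E' Z = Z. -/

import Mathlib

open Matrix

theorem Eprime_symmetric_idempotent {N P L : ℕ}
    (W : Matrix (Fin N) (Fin P) ℝ) (Z : Matrix (Fin N) (Fin L) ℝ)
    (hW : Wᵀ * W = 1) (hZ : Zᵀ * Z = 1)
    (hrank : (fromCols W Z).rank = P + L)
    (hY : IsUnit (Wᵀ * (1 - Z * Zᵀ) * W)) :
    (1 - (1 - Z * Zᵀ) * (1 - W * (Wᵀ * (1 - Z * Zᵀ) * W)⁻¹ * Wᵀ * (1 - Z * Zᵀ)))ᵀ =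
      1 - (1 - Z * Zᵀ) * (1 - W * (Wᵀ * (1 - Z * Zᵀ) * W)⁻¹ * Wᵀ * (1 - Z * Zᵀ)) ∧
    (1 - (1 - Z * Zᵀ) * (1 - W * (Wᵀ * (1 - Z * Zᵀ) * W)⁻¹ * Wᵀ * (1 - Z * Zᵀ))) ^ 2 =
      1 - (1 - Z * Zᵀ) * (1 - W * (Wᵀ * (1 - Z * Zᵀ) * W)⁻¹ * Wᵀ * (1 - Z * Zᵀ)) ∧
    (1 - (1 - Z * Zᵀ) * (1 - W * (Wᵀ * (1 - Z * Zᵀ) * W)⁻¹ * Wᵀ * (1 - Z * Zᵀ))) * W = W ∧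
    (1 - (1 - Z * Zᵀ) * (1 - W * (Wᵀ * (1 - Z * Zᵀ) * W)⁻¹ * Wᵀ * (1 - Z * Zᵀ))) * Z = Z := by
  set Q : Matrix (Fin N) (Fin N) ℝ := 1 - Z * Zᵀ with hQdef
  set M : Matrix (Fin P) (Fin P) ℝ := Wᵀ * Q * W with hMdef
  have hdet : IsUnit M.det := (Matrix.isUnit_iff_isUnit_det M).mp hY
  have hQsym : Qᵀ = Q := by
    simp [hQdef, transpose_sub, transpose_mul]
  have hQ2 : Q * Q = Q := by
    simp only [hQdef, Matrix.sub_mul, Matrix.mul_sub, Matrix.one_mul, Matrix.mul_one]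
    have : Z * Zᵀ * (Z * Zᵀ) = Z * Zᵀ := by
      rw [Matrix.mul_assoc, ← Matrix.mul_assoc Zᵀ, hZ, Matrix.one_mul]
    rw [this]; abel
  have hQZ : Q * Z = 0 := by
    simp only [hQdef, Matrix.sub_mul, Matrix.one_mul, Matrix.mul_assoc, hZ, Matrix.mul_one,
      sub_self]
  have hMsym : Mᵀ = M := by
    simp [hMdef, transpose_mul, hQsym, Matrix.mul_assoc]
  have hMinvsym : (M⁻¹)ᵀ = M⁻¹ := by
    rw [Matrix.transpose_nonsing_inv, hMsym]
  have hMM : M⁻¹ * M = 1 := Matrix.nonsing_inv_mul M hdet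
  have hMM' : M * M⁻¹ = 1 := Matrix.mul_nonsing_inv M hdet
  have hQW : Q * (W * M⁻¹ * Wᵀ * Q) * (Q * (W * M⁻¹ * Wᵀ * Q)) =
      Q * (W * M⁻¹ * Wᵀ * Q) := by
    have h1 : Wᵀ * Q * (Q * (W * M⁻¹ * Wᵀ * Q)) = M * M⁻¹ * Wᵀ * Q := by
      rw [← Matrix.mul_assoc (Wᵀ * Q) Q, Matrix.mul_assoc Wᵀ Q Q, hQ2, hMdef]
      simp only [Matrix.mul_assoc]
    calc Q * (W * M⁻¹ * Wᵀ * Q) * (Q * (W * M⁻¹ * Wᵀ * Q))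
        = Q * (W * (M⁻¹ * (Wᵀ * Q * (Q * (W * M⁻¹ * Wᵀ * Q))))) := by
          simp only [Matrix.mul_assoc]
      _ = Q * (W * (M⁻¹ * (M * M⁻¹ * Wᵀ * Q))) := by rw [h1]
      _ = Q * (W * M⁻¹ * Wᵀ * Q) := by
          rw [hMM', Matrix.one_mul]; simp only [Matrix.mul_assoc]
  refine ⟨?_, ?_, ?_, ?_⟩
  · rw [Matrix.mul_sub, Matrix.mul_one, transpose_sub, transpose_sub, transpose_one,
      transpose_mul, transpose_mul, transpose_mul, transpose_mul, hQsym, hMinvsym,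
      transpose_transpose]
    congr 1
    simp only [Matrix.mul_assoc]
  · rw [sq]
    have expand : (1 - Q * (1 - W * M⁻¹ * Wᵀ * Q)) =
        (1 - Q) + Q * (W * M⁻¹ * Wᵀ * Q) := by
      rw [Matrix.mul_sub, Matrix.mul_one]; abel
    rw [expand]
    have hQA : (1 - Q) * (Q * (W * M⁻¹ * Wᵀ * Q)) = 0 := by
      rw [Matrix.sub_mul, Matrix.one_mul, ← Matrix.mul_assoc Q Q, hQ2, sub_self]
    have hAQ : Q * (W * M⁻¹ * Wᵀ * Q) * (1 - Q) = 0 := by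
      have key : Q * (W * M⁻¹ * Wᵀ * Q) * Q = Q * (W * M⁻¹ * Wᵀ * Q) := by
        simp only [Matrix.mul_assoc]; rw [hQ2]
      rw [Matrix.mul_sub, Matrix.mul_one, key, sub_self]
    have hQQ : (1 - Q) * (1 - Q) = 1 - Q := by
      rw [Matrix.sub_mul, Matrix.one_mul, Matrix.mul_sub, Matrix.mul_one, hQ2, sub_self,
        sub_zero]
    rw [add_mul, mul_add, mul_add, hQQ, hQA, hAQ, hQW, add_zero, zero_add]
  · rw [Matrix.sub_mul, Matrix.one_mul, Matrix.mul_sub, Matrix.mul_one, Matrix.sub_mul,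
      Matrix.mul_assoc Q, Matrix.mul_assoc (W * M⁻¹ * Wᵀ) Q W,
      show W * M⁻¹ * Wᵀ * (Q * W) = W * (M⁻¹ * M) by
        rw [hMdef]; simp only [Matrix.mul_assoc],
      hMM, Matrix.mul_one, sub_self]
    simp
  · rw [Matrix.sub_mul, Matrix.one_mul, Matrix.mul_sub, Matrix.mul_one, Matrix.sub_mul, hQZ]
    simp [Matrix.mul_assoc, hQZ]
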